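/- Let A ⊆ ℝ^d be finite and nonempty with dim(A) = d, and suppose A ⊆ l₁ ∪ ⋯ ∪ l_d where l₁,…,l_d are d parallel lines in ℝ^d with A ∩ l_i nonempty for each i. Then |A-A| ≥ 2(d-1)|A| - d². -/

import Mathlib

open Finset Pointwise

theorem stmt_3 {d : ℕ} (hd : 1 ≤ d) (v : Fin d → ℝ) (hv : v ≠ 0)
    (p : Fin d → (Fin d → ℝ))
    (l : Fin d → Set (Fin d → ℝ))
    (hl : ∀ i, l i = {x | ∃ t : ℝ, x = p i + t • v})
    (A : Finset (Fin d → ℝ)) (hA : A.Nonempty)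
    (hdim : Module.finrank ℝ (affineSpan ℝ (A : Set (Fin d → ℝ))).direction = d)
    (hcover : (A : Set (Fin d → ℝ)) ⊆ ⋃ i, l i)
    (hmeet : ∀ i, ((A : Set (Fin d → ℝ)) ∩ l i).Nonempty) :
    ((A - A).card : ℤ) ≥ 2 * (d - 1 : ℤ) * A.card - d ^ 2 := by
  classical
  haveI : NeZero d := ⟨by omega⟩
  -- choose base points on each line
  have hchoice : ∀ i, ∃ x, x ∈ A ∧ ∃ t : ℝ, x = p i + t • v := by
    intro i
    obtain ⟨x, hxA, hxl⟩ := hmeet i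
    rw [hl i] at hxl
    exact ⟨x, hxA, hxl⟩
  choose a haA t hat using hchoice
  obtain ⟨c, hc⟩ : ∃ c, v c ≠ 0 := by
    by_contra h; push_neg at h; exact hv (funext h)
  set b : Fin d → (Fin d → ℝ) := fun m => if m = 0 then v else a m - a 0 with hb_def
  -- every point of A, shifted by a0, is in the span of b
  have hmem : ∀ z ∈ A, z - a 0 ∈ Submodule.span ℝ (Set.range b) := by
    intro z hz
    obtain ⟨_, ⟨i, rfl⟩, hzl⟩ := hcover hz
    have hzl' : z ∈ l i := hzl
    rw [hl i] at hzl'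
    obtain ⟨s, rfl⟩ := hzl'
    have h1 : p i + s • v - a 0 = (s - t i) • v + (a i - a 0) := by
      rw [hat i]; module
    rw [h1]
    have hva : v ∈ Submodule.span ℝ (Set.range b) :=
      Submodule.subset_span ⟨0, by simp [hb_def]⟩
    have hia : a i - a 0 ∈ Submodule.span ℝ (Set.range b) := by
      by_cases hi : i = 0
      · simp [hi]
      · exact Submodule.subset_span ⟨i, by simp [hb_def, hi]⟩
    exact Submodule.add_mem _ (Submodule.smul_mem _ _ hva) hia
  have h2 : vectorSpan ℝ (A : Set (Fin d → ℝ)) ≤ Submodule.span ℝ (Set.range b) := by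
    rw [vectorSpan_def]
    refine Submodule.span_le.2 ?_
    rintro _ ⟨x, hx, y, hy, rfl⟩
    simp only [vsub_eq_sub]
    have hxy : x - y = (x - a 0) - (y - a 0) := by abel
    rw [hxy]
    exact Submodule.sub_mem _ (hmem x hx) (hmem y hy)
  have htop : vectorSpan ℝ (A : Set (Fin d → ℝ)) = ⊤ := by
    apply Submodule.eq_top_of_finrank_eq
    rw [Module.finrank_fin_fun]
    rw [direction_affineSpan] at hdim
    exact hdim
  have hspan : ⊤ ≤ Submodule.span ℝ (Set.range b) := htop ▸ h2
  have hbind : LinearIndependent ℝ b :=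
    linearIndependent_of_top_le_span_of_card_eq_finrank hspan
      (by simp [Module.finrank_fin_fun])
  -- master lemma
  have hmaster : ∀ (e : Fin d → ℝ) (s : ℝ), ∑ m, e m = 0 → ∑ m, e m • a m = s • v →
      ∀ m, e m = 0 := by
    intro e s hsum heq
    have hcomp : ∑ m, (if m = 0 then -s else e m) • b m = 0 := by
      have e1 : ∑ m, (if m = 0 then -s else e m) • b m
          = ∑ m, (if m = 0 then (-s) • v else e m • (a m - a 0)) := by
        refine Finset.sum_congr rfl fun m _ => ?_
        by_cases hm : m = 0 <;> simp [hb_def, hm]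
      have e2 : ∑ m, (if m = 0 then (-s) • v else e m • (a m - a 0))
          = (-s) • v + ∑ m ∈ Finset.univ.erase 0, e m • (a m - a 0) := by
        rw [← Finset.add_sum_erase _ _ (Finset.mem_univ 0)]
        simp only [if_pos rfl]
        congr 1
        refine Finset.sum_congr rfl fun m hm => ?_
        rw [if_neg (Finset.ne_of_mem_erase hm)]
      have e3 : ∑ m ∈ Finset.univ.erase 0, e m • (a m - a 0)
          = ∑ m, e m • (a m - a 0) := by
        apply Finset.sum_erase
        simp
      have e4 : ∑ m, e m • (a m - a 0) = s • v := by
        simp only [smul_sub]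
        rw [Finset.sum_sub_distrib, ← Finset.sum_smul, hsum, heq, zero_smul, sub_zero]
      rw [e1, e2, e3, e4]
      simp
    have hg := Fintype.linearIndependent_iff.mp hbind _ hcomp
    have hm0 : ∀ m, m ≠ 0 → e m = 0 := by
      intro m hm; have := hg m; simpa [hm] using this
    intro m
    by_cases hm : m = 0
    · subst hm
      have hz : ∑ m ∈ Finset.univ.erase 0, e m = 0 :=
        Finset.sum_eq_zero fun m hm => hm0 m (Finset.ne_of_mem_erase hm)
      have := (Finset.add_sum_erase Finset.univ e (Finset.mem_univ 0)).symm
      rw [this, hz, add_zero] at hsum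
      exact hsum
    · exact hm0 m hm
  -- delta functions
  set del : Fin d → Fin d → ℝ := fun x y => if y = x then 1 else 0 with hdel
  have hdelsum : ∀ x, ∑ n, del x n = 1 := by
    intro x; simp [hdel]
  have hdelsmul : ∀ x, ∑ n, del x n • a n = a x := by
    intro x; simp [hdel, ite_smul]
  -- key lemma 2 : difference in direction v forces equal index
  have hkey2 : ∀ i j : Fin d, ∀ s : ℝ, a i - a j = s • v → i = j := by
    intro i j s heq
    by_contra hij
    have he : ∀ n, (del i n - del j n) = 0 := by
      apply hmaster _ s
      · rw [Finset.sum_sub_distrib, hdelsum, hdelsum, sub_self]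
      · simp only [sub_smul]
        rw [Finset.sum_sub_distrib, hdelsmul, hdelsmul]
        exact heq
    have h1 := he i
    simp only [hdel, if_pos rfl, if_neg hij] at h1
    norm_num at h1
  -- key lemma : disjointness of difference classes
  have hkey : ∀ i j k m : Fin d, ∀ s : ℝ, (a i - a j) - (a k - a m) = s • v →
      i ≠ j → k ≠ m → i = k ∧ j = m := by
    intro i j k m s heq hij hkm
    have he : ∀ n, (del i n - del j n - del k n + del m n) = 0 := by
      apply hmaster _ s
      · rw [Finset.sum_add_distrib, Finset.sum_sub_distrib, Finset.sum_sub_distrib]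
        rw [hdelsum, hdelsum, hdelsum, hdelsum]; ring
      · simp only [add_smul, sub_smul]
        rw [Finset.sum_add_distrib, Finset.sum_sub_distrib, Finset.sum_sub_distrib]
        rw [hdelsmul, hdelsmul, hdelsmul, hdelsmul]
        rw [← heq]; abel
    have hik : i = k := by
      by_contra hik
      have h1 := he i
      simp only [hdel, if_pos rfl, if_neg hij, if_neg hik] at h1
      split_ifs at h1 <;> norm_num at h1
    subst hik
    have hjm : j = m := by
      by_contra hjm
      have h1 := he j
      simp only [hdel, if_pos rfl, if_neg (Ne.symm hij), if_neg hjm] at h1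
      norm_num at h1
    exact ⟨rfl, hjm⟩
  -- the pieces of A on each line
  set Ap : Fin d → Finset (Fin d → ℝ) := fun i => A.filter (· ∈ l i) with hApdef
  have hApsub : ∀ i, Ap i ⊆ A := fun i => Finset.filter_subset _ _
  have hmemAp : ∀ i x, x ∈ Ap i → ∃ s : ℝ, x = a i + s • v := by
    intro i x hx
    have hxl : x ∈ l i := (Finset.mem_filter.mp hx).2
    rw [hl i] at hxl
    obtain ⟨u, rfl⟩ := hxl
    refine ⟨u - t i, ?_⟩
    rw [hat i]; module
  have hApne : ∀ i, (Ap i).Nonempty := by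
    intro i
    obtain ⟨x, hxA, hxl⟩ := hmeet i
    exact ⟨x, Finset.mem_filter.2 ⟨hxA, hxl⟩⟩
  -- pieces are pairwise disjoint
  have hdisj : ∀ i j : Fin d, i ≠ j → Disjoint (Ap i) (Ap j) := by
    intro i j hij
    rw [Finset.disjoint_left]
    intro x hxi hxj
    obtain ⟨s, hs⟩ := hmemAp i x hxi
    obtain ⟨s', hs'⟩ := hmemAp j x hxj
    refine hij (hkey2 i j (s' - s) ?_)
    have : a i + s • v = a j + s' • v := by rw [← hs, ← hs']
    have h3 : a i - a j = s' • v - s • v := by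
      rw [sub_eq_sub_iff_add_eq_add]; rw [this]; abel
    rw [h3]; module
  -- A is partitioned by the pieces
  have hGcard : ∑ i, (Ap i).card = A.card := by
    rw [← Finset.card_biUnion (fun i _ j _ hij => hdisj i j hij)]
    congr 1
    ext x
    simp only [Finset.mem_biUnion, Finset.mem_univ, true_and]
    constructor
    · rintro ⟨i, hx⟩; exact (Finset.mem_filter.mp hx).1
    · intro hx
      obtain ⟨_, ⟨i, rfl⟩, hxl⟩ := hcover hx
      exact ⟨i, Finset.mem_filter.2 ⟨hx, hxl⟩⟩
  -- projection to a coordinate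
  set f : (Fin d → ℝ) →ₗ[ℝ] ℝ := LinearMap.proj c with hfdef
  have hinj : ∀ i, Set.InjOn f (Ap i) := by
    intro i x hx y hy hxy
    obtain ⟨s, rfl⟩ := hmemAp i x hx
    obtain ⟨s', rfl⟩ := hmemAp i y hy
    have hxy' : a i c + s * v c = a i c + s' * v c := hxy
    have : s = s' := by
      have := add_left_cancel hxy'
      exact mul_right_cancel₀ hc this
    rw [this]
  have hcard_im : ∀ i, ((Ap i).image f).card = (Ap i).card :=
    fun i => Finset.card_image_of_injOn (hinj i)
  have himg_sub : ∀ s u : Finset (Fin d → ℝ), (s - u).image f = s.image f - u.image f :=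
    fun s u => Finset.image_image₂_distrib (map_sub f)
  -- lower bound for each difference class
  have hlower : ∀ i j, (Ap i).card + (Ap j).card ≤ (Ap i - Ap j).card + 1 := by
    intro i j
    have h1 : ((Ap i - Ap j).image f).card ≤ (Ap i - Ap j).card := Finset.card_image_le
    rw [himg_sub] at h1
    have h2 : ((Ap i).image f).card + ((Ap j).image f).card - 1
        ≤ ((Ap i).image f - (Ap j).image f).card := by
      rw [sub_eq_add_neg]
      have := cauchy_davenport_add_of_linearOrder_isCancelAdd
        ((hApne i).image f) ((hApne j).image f).neg
      simpa using this
    have h3 : 1 ≤ ((Ap i).image f).card := Finset.card_pos.2 ((hApne i).image f)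
    rw [hcard_im, hcard_im] at h2
    omega
  -- disjointness of difference classes
  set P := (Finset.univ : Finset (Fin d)).offDiag with hPdef
  have hPd : ∀ q ∈ P, ∀ r ∈ P, q ≠ r → Disjoint (Ap q.1 - Ap q.2) (Ap r.1 - Ap r.2) := by
    intro q hq r hr hqr
    rw [Finset.mem_offDiag] at hq hr
    rw [Finset.disjoint_left]
    intro x hxq hxr
    obtain ⟨u, hu, w, hw, rfl⟩ := Finset.mem_sub.mp hxq
    obtain ⟨u', hu', w', hw', heq'⟩ := Finset.mem_sub.mp hxr
    obtain ⟨s1, rfl⟩ := hmemAp _ u hu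
    obtain ⟨s2, rfl⟩ := hmemAp _ w hw
    obtain ⟨s3, hu'e⟩ := hmemAp _ u' hu'
    obtain ⟨s4, hw'e⟩ := hmemAp _ w' hw'
    have heq2 : (a q.1 - a q.2) - (a r.1 - a r.2) = (s3 - s4 - s1 + s2) • v := by
      have : a q.1 + s1 • v - (a q.2 + s2 • v) = a r.1 + s3 • v - (a r.2 + s4 • v) := by
        rw [← hu'e, ← hw'e, heq']
      have h5 : (a q.1 - a q.2) - (a r.1 - a r.2)
          = (a q.1 + s1 • v - (a q.2 + s2 • v)) - (a r.1 + s3 • v - (a r.2 + s4 • v))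
            + (s3 - s4 - s1 + s2) • v := by
        module
      rw [h5, this, sub_self, zero_add]
    obtain ⟨h6, h7⟩ := hkey q.1 q.2 r.1 r.2 _ heq2 hq.2.2 hr.2.2
    exact hqr (Prod.ext h6 h7)
  -- the union bound
  have hcard1 : ∑ q ∈ P, (Ap q.1 - Ap q.2).card ≤ (A - A).card := by
    rw [← Finset.card_biUnion hPd]
    apply Finset.card_le_card
    intro x hx
    obtain ⟨q, hq, hxq⟩ := Finset.mem_biUnion.mp hx
    exact Finset.sub_subset_sub (hApsub _) (hApsub _) hxq
  -- sums over the off-diagonal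
  have hoff : ∀ g : Fin d → ℤ, ∑ q ∈ P, (g q.1 + g q.2) = 2 * ((d : ℤ) - 1) * ∑ i, g i := by
    intro g
    have hsplit : ∑ q ∈ Finset.univ ×ˢ Finset.univ, (g q.1 + g q.2)
        = ∑ q ∈ (Finset.univ : Finset (Fin d)).diag, (g q.1 + g q.2)
          + ∑ q ∈ P, (g q.1 + g q.2) := by
      rw [← Finset.sum_union (Finset.disjoint_diag_offDiag _), Finset.diag_union_offDiag]
    have hinner : ∀ x : Fin d, ∑ y : Fin d, (g x + g y) = (d : ℤ) * g x + ∑ i, g i := by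
      intro x
      rw [Finset.sum_add_distrib, Finset.sum_const, Finset.card_univ, Fintype.card_fin,
        nsmul_eq_mul]
    have hprod : ∑ q ∈ Finset.univ ×ˢ Finset.univ, (g q.1 + g q.2)
        = 2 * (d : ℤ) * ∑ i, g i := by
      rw [Finset.sum_product]
      rw [Finset.sum_congr rfl fun x _ => hinner x]
      rw [Finset.sum_add_distrib, Finset.sum_const, Finset.card_univ, Fintype.card_fin,
        nsmul_eq_mul, ← Finset.mul_sum]
      ring
    have hdiag : ∑ q ∈ (Finset.univ : Finset (Fin d)).diag, (g q.1 + g q.2)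
        = 2 * ∑ i, g i := by
      have h2m : ∀ i : Fin d, g (i, i).1 + g (i, i).2 = 2 * g i := fun i => (two_mul _).symm
      rw [Finset.sum_diag, Finset.sum_congr rfl fun i _ => h2m i, ← Finset.mul_sum]
    have := hsplit
    rw [hprod, hdiag] at this
    linarith
  have hPcard : (P.card : ℤ) = (d : ℤ) * d - d := by
    rw [hPdef, Finset.offDiag_card, Finset.card_univ, Fintype.card_fin]
    have hdd : d ≤ d * d := Nat.le_mul_of_pos_left d (by omega)
    push_cast [Nat.cast_sub hdd]
    ring
  -- put everything together
  have hs1 : ∑ q ∈ P, (((Ap q.1).card : ℤ) + ((Ap q.2).card : ℤ) - 1)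
      ≤ ∑ q ∈ P, ((Ap q.1 - Ap q.2).card : ℤ) := by
    apply Finset.sum_le_sum
    intro q hq
    have h := hlower q.1 q.2
    have h1 : 1 ≤ (Ap q.1).card := Finset.card_pos.2 (hApne q.1)
    omega
  have hs2 : ∑ q ∈ P, (((Ap q.1).card : ℤ) + ((Ap q.2).card : ℤ))
      = 2 * ((d : ℤ) - 1) * (A.card : ℤ) := by
    rw [hoff (fun i => ((Ap i).card : ℤ))]
    congr 1
    rw [← hGcard]
    push_cast
    rfl
  have hs3 : ∑ q ∈ P, (((Ap q.1).card : ℤ) + ((Ap q.2).card : ℤ) - 1)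
      = 2 * ((d : ℤ) - 1) * (A.card : ℤ) - P.card := by
    rw [Finset.sum_sub_distrib, hs2, Finset.sum_const, nsmul_eq_mul, mul_one]
  have hc1 : (∑ q ∈ P, ((Ap q.1 - Ap q.2).card : ℤ)) ≤ ((A - A).card : ℤ) := by
    rw [← Nat.cast_sum]
    exact_mod_cast hcard1
  have hd0 : (0 : ℤ) ≤ d := by positivity
  have hfin : 2 * ((d : ℤ) - 1) * (A.card : ℤ) - ((d : ℤ) * d - d) ≤ ((A - A).card : ℤ) := by
    rw [← hPcard]
    linarith [hs1, hc1, hs3.ge, hs3.le]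
  have hsq : ((d : ℤ)) ^ 2 = (d : ℤ) * d := sq (d : ℤ) ▸ rfl
  push_cast
  nlinarith [hfin, hd0]
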